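/- Let α > 0 and Δ > 0, let n ∈ ℕ, set t_k = kΔ for k = 0, 1, …, n, and define R(t) = Σ_{k=0}^{n} (−1)^k · e^{−α(t − kΔ)} · 1_{[kΔ, ∞)}(t). Then |R(t)| ≥ e^{−αΔ}(1 − e^{−αΔ}) for every t ∈ [0, nΔ]. -/

import Mathlib

open Set Function Filter Classical

/-- The next SOD sampling time after time `s` for input `f`, threshold `θ`, on `[0,T]`:
the infimum of `{t ∈ (s,T] : |f t - f s| ≥ θ}` if this set is nonempty, `none` otherwise. -/
noncomputable def sodNext (T θ : ℝ) (f : ℝ → ℝ) (s : ℝ) : Option ℝ :=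
  if (∃ t ∈ Set.Ioc s T, θ ≤ |f t - f s|) then
    some (sInf {t | t ∈ Set.Ioc s T ∧ θ ≤ |f t - f s|})
  else none

/-- The `k`-th SOD sampling time (`t_0 = 0`), `none` if the recursion has stopped before `k`. -/
noncomputable def sodTime (T θ : ℝ) (f : ℝ → ℝ) : ℕ → Option ℝ
  | 0 => some 0
  | n + 1 => (sodTime T θ f n).bind (sodNext T θ f)

/-- The SOD output event sequence `Φ_θ(f)` : it takes the value `f t_k - f t_{k-1}` at
each sampling time `t_k`, `k ≥ 1`, and `0` elsewhere. -/
noncomputable def sodOut (T θ : ℝ) (f : ℝ → ℝ) : ℝ → ℝ := fun t =>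
  if h : ∃ k : ℕ, ∃ s : ℝ, sodTime T θ f k = some s ∧ sodNext T θ f s = some t
  then f t - f h.choose_spec.choose
  else 0

/-- Membership in `F[0,T]`: continuous on `[0,T]` with `f 0 = 0`. -/
def memF (T : ℝ) (f : ℝ → ℝ) : Prop :=
  ContinuousOn f (Set.Icc 0 T) ∧ f 0 = 0

/-- An event sequence on `[0,T]`: finitely supported with support in `[0,T]`. -/
def IsEventSeq (T : ℝ) (η : ℝ → ℝ) : Prop :=
  (Function.support η).Finite ∧ Function.support η ⊆ Set.Icc 0 T

/-- `η` is `±1`-valued on its support. -/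
def IsPM (η : ℝ → ℝ) : Prop :=
  ∀ t ∈ Function.support η, η t = 1 ∨ η t = -1

/-- Weyl's discrepancy norm `‖η‖_D = sup_{0 ≤ a ≤ b ≤ T} |Σ_{t ∈ [a,b]} η t|`. -/
noncomputable def discNorm (T : ℝ) (η : ℝ → ℝ) : ℝ :=
  sSup {x | ∃ a b : ℝ, 0 ≤ a ∧ a ≤ b ∧ b ≤ T ∧ x = |∑ᶠ t ∈ Set.Icc a b, η t|}

/-- Alexiewicz norm `‖η‖_A = sup_{a ∈ [0,T]} |Σ_{t ∈ [0,a]} η t|`. -/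
noncomputable def alexNorm (T : ℝ) (η : ℝ → ℝ) : ℝ :=
  sSup {x | ∃ a : ℝ, 0 ≤ a ∧ a ≤ T ∧ x = |∑ᶠ t ∈ Set.Icc 0 a, η t|}

/-- The values of `η` at consecutive support points alternate in sign. -/
def Alternating (η : ℝ → ℝ) : Prop :=
  ∀ s u : ℝ, s ∈ Function.support η → u ∈ Function.support η → s < u →
    (∀ t ∈ Function.support η, ¬ (s < t ∧ t < u)) → η s * η u < 0

/-- One `(+−)`-transcription step: erase a `+1` followed (with no support in between) by a `−1`. -/
def StepPM (η η' : ℝ → ℝ) : Prop :=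
  ∃ s u : ℝ, s < u ∧ η s = 1 ∧ η u = -1 ∧ (∀ t : ℝ, s < t → t < u → η t = 0) ∧
    η' = Function.update (Function.update η s 0) u 0

/-- One `(−+)`-transcription step: erase a `−1` followed (with no support in between) by a `+1`. -/
def StepMP (η η' : ℝ → ℝ) : Prop :=
  ∃ s u : ℝ, s < u ∧ η s = -1 ∧ η u = 1 ∧ (∀ t : ℝ, s < t → t < u → η t = 0) ∧
    η' = Function.update (Function.update η s 0) u 0

/-- `StepsN R n x y` : `y` is obtained from `x` by `n` successive `R`-steps. -/
def StepsN (R : (ℝ → ℝ) → (ℝ → ℝ) → Prop) : ℕ → (ℝ → ℝ) → (ℝ → ℝ) → Prop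
  | 0, x, y => x = y
  | n + 1, x, z => ∃ y, R x y ∧ StepsN R n y z

/-- Uniform distance `‖f − g‖_∞` over `[0,T]`. -/
noncomputable def unifDist (T : ℝ) (f g : ℝ → ℝ) : ℝ :=
  sSup {x | ∃ t ∈ Set.Icc 0 T, x = |f t - g t|}

/-- for alternating unit events at the equidistant times `kΔ`, `k = 0,…,n`,
the van Rossum smoothing `R(s) = Σ_{k=0}^n (−1)^k e^{−α(s−kΔ)} 1_{[kΔ,∞)}(s)` satisfies
`|R(s)| ≥ e^{−αΔ}(1 − e^{−αΔ})` on `[0, nΔ]`. -/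
theorem stmt14 (α Δ : ℝ) (hα : 0 < α) (hΔ : 0 < Δ) (n : ℕ) :
    ∀ s ∈ Set.Icc (0 : ℝ) ((n : ℝ) * Δ),
      Real.exp (-(α * Δ)) * (1 - Real.exp (-(α * Δ))) ≤
        |∑ k ∈ Finset.range (n + 1),
          ((-1 : ℝ)^k *
            (if (k : ℝ) * Δ ≤ s then Real.exp (-(α * (s - (k : ℝ) * Δ))) else 0))| := by
  intro s hs
  obtain ⟨hs0, hsn⟩ := hs
  set q := Real.exp (α * Δ) with hqdef
  have hq1 : 1 < q := by
    rw [hqdef, ← Real.exp_zero]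
    exact Real.exp_lt_exp.mpr (by positivity)
  have hq0 : 0 < q := lt_trans one_pos hq1
  set m := ⌊s / Δ⌋₊ with hmdef
  have hmn : m ≤ n := by
    have h1 : s / Δ ≤ (n : ℝ) := (div_le_iff₀ hΔ).mpr hsn
    calc m ≤ ⌊(n : ℝ)⌋₊ := Nat.floor_le_floor h1
    _ = n := Nat.floor_natCast n
  have hcond : ∀ k : ℕ, ((k : ℝ) * Δ ≤ s ↔ k ≤ m) := by
    intro k
    rw [hmdef, Nat.le_floor_iff (by positivity), le_div_iff₀ hΔ]
  have hsle : s ≤ ((m : ℝ) + 1) * Δ := by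
    have := Nat.lt_floor_add_one (s / Δ)
    have h2 : s / Δ < (m : ℝ) + 1 := by exact_mod_cast this
    nlinarith [(div_lt_iff₀ hΔ).mp h2]
  set E := Real.exp (-(α * s)) with hEdef
  have hE0 : 0 < E := Real.exp_pos _
  set P := q ^ (m + 1) with hPdef
  have hP0 : 0 < P := pow_pos hq0 _
  have hEP : 1 ≤ E * P := by
    rw [hEdef, hPdef, hqdef, ← Real.exp_nat_mul, ← Real.exp_add, ← Real.exp_zero]
    apply Real.exp_le_exp.mpr
    have : ((m : ℝ) + 1) * (α * Δ) = α * (((m : ℝ) + 1) * Δ) := by ring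
    push_cast
    nlinarith
  -- rewrite the sum
  have hterm : ∀ k : ℕ, k ≤ m →
      ((-1 : ℝ) ^ k * Real.exp (-(α * (s - (k : ℝ) * Δ)))) = E * (-q) ^ k := by
    intro k hk
    have h1 : Real.exp (-(α * (s - (k : ℝ) * Δ))) = E * q ^ k := by
      rw [hEdef, hqdef, ← Real.exp_nat_mul, ← Real.exp_add]
      congr 1; ring
    rw [h1, neg_pow]; ring
  have hsum : (∑ k ∈ Finset.range (n + 1),
      ((-1 : ℝ) ^ k * (if (k : ℝ) * Δ ≤ s then Real.exp (-(α * (s - (k : ℝ) * Δ))) else 0)))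
      = E * ∑ k ∈ Finset.range (m + 1), (-q) ^ k := by
    rw [Finset.mul_sum]
    rw [← Finset.sum_subset (Finset.range_subset_range.mpr (by omega) :
        Finset.range (m + 1) ⊆ Finset.range (n + 1))]
    · apply Finset.sum_congr rfl
      intro k hk
      have hk' : k ≤ m := by simpa [Nat.lt_succ_iff] using hk
      rw [if_pos ((hcond k).mpr hk')]
      exact hterm k hk'
    · intro k _ hk
      have hk' : ¬ k ≤ m := by simpa [Nat.lt_succ_iff] using hk
      rw [if_neg (fun h => hk' ((hcond k).mp h)), mul_zero]
  rw [hsum]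
  have hgeom : (∑ k ∈ Finset.range (m + 1), (-q) ^ k) = ((-q) ^ (m + 1) - 1) / (-q - 1) := by
    exact geom_sum_eq (by intro h; nlinarith [h]) (m + 1)
  rw [hgeom, abs_mul, abs_of_pos hE0]
  have hLHS : Real.exp (-(α * Δ)) * (1 - Real.exp (-(α * Δ))) = (q - 1) / (q * q) := by
    rw [Real.exp_neg, ← hqdef]
    field_simp
  rw [hLHS, abs_div, abs_of_neg (by nlinarith : -q - 1 < 0)]
  clear_value P E m q
  clear hsum hgeom hterm hcond hLHS hqdef hEdef hsle hmn hsn hs0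
  rcases Nat.even_or_odd m with hpar | hpar
  · -- m even, m+1 odd : (-q)^(m+1) = -P
    have hodd : Odd (m + 1) := Even.add_one hpar
    have hneg : (-q) ^ (m + 1) = -P := by rw [hPdef, hodd.neg_pow]
    rw [hneg]
    have habs : |-P - 1| = P + 1 := by rw [abs_of_neg (by nlinarith)]; ring
    rw [habs]
    have hPq : q ≤ P := by
      rw [hPdef]
      calc q = q ^ 1 := (pow_one q).symm
      _ ≤ q ^ (m + 1) := pow_le_pow_right₀ (le_of_lt hq1) (by omega)
    rw [div_le_iff₀ (by positivity), show -(-q - 1) = q + 1 by ring,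
      ← mul_div_assoc, div_mul_eq_mul_div, le_div_iff₀ (by nlinarith : (0:ℝ) < q + 1)]
    nlinarith [mul_pos hE0 hq0]
  · -- m odd, m+1 even : (-q)^(m+1) = P
    have heven : Even (m + 1) := Odd.add_one hpar
    have hneg : (-q) ^ (m + 1) = P := by rw [hPdef, heven.neg_pow]
    rw [hneg]
    have hP1 : 1 ≤ P := by
      rw [hPdef]; exact one_le_pow₀ (le_of_lt hq1)
    have habs : |P - 1| = P - 1 := abs_of_nonneg (by linarith)
    rw [habs]
    have hm1 : 1 ≤ m := hpar.pos
    have hPq2 : q ^ 2 ≤ P := by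
      rw [hPdef]
      exact pow_le_pow_right₀ (le_of_lt hq1) (by omega)
    rw [div_le_iff₀ (by positivity), show -(-q - 1) = q + 1 by ring,
      ← mul_div_assoc, div_mul_eq_mul_div, le_div_iff₀ (by nlinarith : (0:ℝ) < q + 1)]
    have h1 : 0 ≤ (q ^ 2 - 1) * (E * P - 1) :=
      mul_nonneg (by nlinarith) (by linarith)
    have h2 : 0 ≤ E * (P - q ^ 2) := mul_nonneg (le_of_lt hE0) (by linarith)
    nlinarith [h1, h2]
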